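/- arXiv:1810.12221 — 3 statements merged into one kernel-verified Lean document; each statement's English description precedes it below -/
import Mathlib

section
/- Let ε, μ, c > 0 be constants with c² = 1/(εμ). Suppose E, B : ℝ³ × ℝ → ℝ³ are C² vector fields, J : ℝ³ × ℝ → ℝ³ is a C¹ vector field and ρ : ℝ³ × ℝ → ℝ is a C¹ scalar field such that Ampère's law ∇×B − (1/c²)∂ₜE = μJ and the continuity equation ∂ₜρ + ∇·J = 0 hold at all (x,t), and such that at some time t₀ one has ∇·E(x,t₀) = (1/ε)ρ(x,t₀) for all x. Then Gauss's law ∇·E(x,t) = (1/ε)ρ(x,t) holds for all x ∈ ℝ³ and all t ∈ ℝ. -/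
open ContinuousLinearMap

lemma gl_slice_left {F : Type*} [NormedAddCommGroup F] [NormedSpace ℝ F]
    (φ : (Fin 3 → ℝ) × ℝ → F) (hφ : Differentiable ℝ φ) (t : ℝ) (x v : Fin 3 → ℝ) :
    fderiv ℝ (fun y => φ (y, t)) x v = fderiv ℝ φ (x, t) (v, 0) := by
  have h : HasFDerivAt (fun y : Fin 3 → ℝ => φ (y, t))
      ((fderiv ℝ φ (x, t)).comp (inl ℝ (Fin 3 → ℝ) ℝ)) x :=
    (hφ (x, t)).hasFDerivAt.comp x (hasFDerivAt_prodMk_left x t)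
  rw [h.fderiv]; rfl

lemma gl_hasDerivAt_right {F : Type*} [NormedAddCommGroup F] [NormedSpace ℝ F]
    (φ : (Fin 3 → ℝ) × ℝ → F) (hφ : Differentiable ℝ φ) (x : Fin 3 → ℝ) (t : ℝ) :
    HasDerivAt (fun s => φ (x, s)) (fderiv ℝ φ (x, t) (0, 1)) t := by
  have h : HasFDerivAt (fun s : ℝ => φ (x, s))
      ((fderiv ℝ φ (x, t)).comp (inr ℝ (Fin 3 → ℝ) ℝ)) t :=
    (hφ (x, t)).hasFDerivAt.comp t (hasFDerivAt_prodMk_right x t)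
  have := h.hasDerivAt
  simpa using this

lemma gl_contDiff_dir (φ : (Fin 3 → ℝ) × ℝ → ℝ) (hφ : ContDiff ℝ 2 φ)
    (v : (Fin 3 → ℝ) × ℝ) : ContDiff ℝ 1 (fun p => fderiv ℝ φ p v) := by
  have h1 : ContDiff ℝ 1 (fderiv ℝ φ) := hφ.fderiv_right (by norm_num)
  exact (ContinuousLinearMap.apply ℝ ℝ v).contDiff.comp h1

lemma gl_swap (φ : (Fin 3 → ℝ) × ℝ → ℝ) (hφ : ContDiff ℝ 2 φ)
    (p u v : (Fin 3 → ℝ) × ℝ) :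
    fderiv ℝ (fun q => fderiv ℝ φ q v) p u = fderiv ℝ (fun q => fderiv ℝ φ q u) p v := by
  have h1 : ContDiff ℝ 1 (fderiv ℝ φ) := hφ.fderiv_right (by norm_num)
  have hd : DifferentiableAt ℝ (fderiv ℝ φ) p := (h1.differentiable (by norm_num)) p
  have key : ∀ w : (Fin 3 → ℝ) × ℝ, fderiv ℝ (fun q => fderiv ℝ φ q w) p
      = (ContinuousLinearMap.apply ℝ ℝ w).comp (fderiv ℝ (fderiv ℝ φ) p) := by
    intro w
    have h2 : HasFDerivAt (fun q => fderiv ℝ φ q w)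
        ((ContinuousLinearMap.apply ℝ ℝ w).comp (fderiv ℝ (fderiv ℝ φ) p)) p :=
      (ContinuousLinearMap.apply ℝ ℝ w).hasFDerivAt.comp p hd.hasFDerivAt
    exact h2.fderiv
  have hsymm := (hφ.contDiffAt (x := p)).isSymmSndFDerivAt (by rw [minSmoothness_of_isRCLikeNormedField])
  rw [key u, key v]
  simpa using hsymm u v

lemma gl_pi_apply (φ : (Fin 3 → ℝ) × ℝ → Fin 3 → ℝ) (q : (Fin 3 → ℝ) × ℝ)
    (hφ : DifferentiableAt ℝ φ q) (k : Fin 3) (v : (Fin 3 → ℝ) × ℝ) :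
    fderiv ℝ (fun p => φ p k) q v = fderiv ℝ φ q v k := by
  have h : HasFDerivAt (fun p => φ p k)
      ((ContinuousLinearMap.proj (R := ℝ) (φ := fun _ : Fin 3 => ℝ) k).comp (fderiv ℝ φ q)) q :=
    (ContinuousLinearMap.proj (R := ℝ) (φ := fun _ : Fin 3 => ℝ) k).hasFDerivAt.comp q hφ.hasFDerivAt
  rw [h.fderiv]; rfl

lemma gl_term (c2 m : ℝ) (Ek Bb Bb' Jk : (Fin 3 → ℝ) × ℝ → ℝ)
    (hEk : ContDiff ℝ 2 Ek) (hBb : ContDiff ℝ 2 Bb) (hBb' : ContDiff ℝ 2 Bb')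
    (hJk : ContDiff ℝ 1 Jk)
    (x : Fin 3 → ℝ) (s : ℝ) (k a a' : Fin 3)
    (hid : ∀ y : Fin 3 → ℝ, fderiv ℝ Ek (y, s) (0, 1)
        = c2 * (fderiv ℝ Bb (y, s) (Pi.single a 1, 0)
              - fderiv ℝ Bb' (y, s) (Pi.single a' 1, 0)) - m * Jk (y, s)) :
    fderiv ℝ (fun p => fderiv ℝ Ek p (Pi.single k 1, 0)) (x, s) (0, 1)
      = c2 * (fderiv ℝ (fun p => fderiv ℝ Bb p (Pi.single k 1, 0)) (x, s) (Pi.single a 1, 0)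
            - fderiv ℝ (fun p => fderiv ℝ Bb' p (Pi.single k 1, 0)) (x, s) (Pi.single a' 1, 0))
        - m * fderiv ℝ Jk (x, s) (Pi.single k 1, 0) := by
  -- swap the mixed partial derivative on the left
  rw [gl_swap Ek hEk (x, s) (0, 1) (Pi.single k 1, 0)]
  -- express as a spatial derivative of the sliced function
  have hDt : Differentiable ℝ (fun p => fderiv ℝ Ek p (0, 1)) :=
    (gl_contDiff_dir Ek hEk _).differentiable (by norm_num)
  rw [← gl_slice_left (fun p => fderiv ℝ Ek p (0, 1)) hDt s x (Pi.single k 1)]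
  -- the sliced function equals the combination of B- and J- terms
  have hfun : (fun y : Fin 3 → ℝ => fderiv ℝ Ek (y, s) (0, 1))
      = fun y => c2 * ((fun p => fderiv ℝ Bb p (Pi.single a 1, 0)) (y, s)
                     - (fun p => fderiv ℝ Bb' p (Pi.single a' 1, 0)) (y, s))
               - m * Jk (y, s) := funext fun y => hid y
  rw [hfun]
  -- differentiate the combination
  set φa : (Fin 3 → ℝ) × ℝ → ℝ := fun p => fderiv ℝ Bb p (Pi.single a 1, 0) with hφa
  set φa' : (Fin 3 → ℝ) × ℝ → ℝ := fun p => fderiv ℝ Bb' p (Pi.single a' 1, 0) with hφa'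
  have hQa : HasFDerivAt (fun y : Fin 3 → ℝ => φa (y, s))
      ((fderiv ℝ φa (x, s)).comp (ContinuousLinearMap.inl ℝ (Fin 3 → ℝ) ℝ)) x :=
    by have h2 := ((show Differentiable ℝ φa from (gl_contDiff_dir Bb hBb _).differentiable (by norm_num)) (x, s)).hasFDerivAt.comp x
        (hasFDerivAt_prodMk_left (𝕜 := ℝ) x s)
       exact h2
  have hQa' : HasFDerivAt (fun y : Fin 3 → ℝ => φa' (y, s))
      ((fderiv ℝ φa' (x, s)).comp (ContinuousLinearMap.inl ℝ (Fin 3 → ℝ) ℝ)) x :=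
    by have h2 := ((show Differentiable ℝ φa' from (gl_contDiff_dir Bb' hBb' _).differentiable (by norm_num)) (x, s)).hasFDerivAt.comp x
        (hasFDerivAt_prodMk_left (𝕜 := ℝ) x s)
       exact h2
  have hJs : HasFDerivAt (fun y : Fin 3 → ℝ => Jk (y, s))
      ((fderiv ℝ Jk (x, s)).comp (ContinuousLinearMap.inl ℝ (Fin 3 → ℝ) ℝ)) x :=
    ((hJk.differentiable (by norm_num)) (x, s)).hasFDerivAt.comp x (hasFDerivAt_prodMk_left x s)
  have htot := ((hQa.sub hQa').const_mul c2).sub (hJs.const_mul m)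
  rw [HasFDerivAt.fderiv (f := fun y => c2 * (φa (y, s) - φa' (y, s)) - m * Jk (y, s)) htot]
  -- evaluate and swap the B mixed partials
  have e1 : ((c2 • ((fderiv ℝ φa (x, s)).comp (ContinuousLinearMap.inl ℝ (Fin 3 → ℝ) ℝ)
      - (fderiv ℝ φa' (x, s)).comp (ContinuousLinearMap.inl ℝ (Fin 3 → ℝ) ℝ))
      - m • ((fderiv ℝ Jk (x, s)).comp (ContinuousLinearMap.inl ℝ (Fin 3 → ℝ) ℝ)))
        (Pi.single k 1))
      = c2 * (fderiv ℝ φa (x, s) (Pi.single k 1, 0) - fderiv ℝ φa' (x, s) (Pi.single k 1, 0))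
        - m * fderiv ℝ Jk (x, s) (Pi.single k 1, 0) := by
    simp [ContinuousLinearMap.sub_apply, ContinuousLinearMap.smul_apply,
      ContinuousLinearMap.comp_apply]
  rw [e1, hφa, hφa']
  rw [gl_swap Bb hBb (x, s) (Pi.single k 1, 0) (Pi.single a 1, 0),
      gl_swap Bb' hBb' (x, s) (Pi.single k 1, 0) (Pi.single a' 1, 0)]



/-- Spatial partial derivative in the `i`-th coordinate direction. -/
noncomputable def pd (i : Fin 3) (f : (Fin 3 → ℝ) → ℝ) (x : Fin 3 → ℝ) : ℝ :=
  fderiv ℝ f x (Pi.single i 1)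

/-- Spatial divergence of a vector field on ℝ³: `∇·F = ∑ᵢ ∂ᵢFᵢ`. -/
noncomputable def vdiv (F : (Fin 3 → ℝ) → Fin 3 → ℝ) (x : Fin 3 → ℝ) : ℝ :=
  ∑ i, pd i (fun y => F y i) x

/-- Spatial curl of a vector field on ℝ³: `(∇×F)ₖ = ∑ᵢⱼ εₖᵢⱼ ∂ᵢFⱼ`. -/
noncomputable def vcurl (F : (Fin 3 → ℝ) → Fin 3 → ℝ) (x : Fin 3 → ℝ) : Fin 3 → ℝ :=
  ![pd 1 (fun y => F y 2) x - pd 2 (fun y => F y 1) x,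
    pd 2 (fun y => F y 0) x - pd 0 (fun y => F y 2) x,
    pd 0 (fun y => F y 1) x - pd 1 (fun y => F y 0) x]

/-- If Ampère's law `∇×B − (1/c²)∂ₜE = μJ` and the continuity equation
`∂ₜρ + ∇·J = 0` hold everywhere, and Gauss's law `∇·E = (1/ε)ρ` holds at some time `t₀`,
then Gauss's law holds at all times. -/
theorem gauss_law_propagation
    (ε μ c : ℝ) (hε : 0 < ε) (hμ : 0 < μ) (hc : 0 < c) (hcεμ : c ^ 2 = 1 / (ε * μ))
    (E B : (Fin 3 → ℝ) → ℝ → Fin 3 → ℝ) (J : (Fin 3 → ℝ) → ℝ → Fin 3 → ℝ)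
    (ρ : (Fin 3 → ℝ) → ℝ → ℝ)
    (hE : ContDiff ℝ 2 (fun p : (Fin 3 → ℝ) × ℝ => E p.1 p.2))
    (hB : ContDiff ℝ 2 (fun p : (Fin 3 → ℝ) × ℝ => B p.1 p.2))
    (hJ : ContDiff ℝ 1 (fun p : (Fin 3 → ℝ) × ℝ => J p.1 p.2))
    (hρ : ContDiff ℝ 1 (fun p : (Fin 3 → ℝ) × ℝ => ρ p.1 p.2))
    (ampere : ∀ (x : Fin 3 → ℝ) (t : ℝ),
      vcurl (fun y => B y t) x - (1 / c ^ 2) • deriv (fun s => E x s) t = μ • J x t)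
    (continuity : ∀ (x : Fin 3 → ℝ) (t : ℝ),
      deriv (fun s => ρ x s) t + vdiv (fun y => J y t) x = 0)
    (t₀ : ℝ)
    (h₀ : ∀ x : Fin 3 → ℝ, vdiv (fun y => E y t₀) x = (1 / ε) * ρ x t₀) :
    ∀ (x : Fin 3 → ℝ) (t : ℝ), vdiv (fun y => E y t) x = (1 / ε) * ρ x t := by
  intro x t
  have hEd : Differentiable ℝ (fun p : (Fin 3 → ℝ) × ℝ => E p.1 p.2) :=
    hE.differentiable (by norm_num)
  have hρd : Differentiable ℝ (fun p : (Fin 3 → ℝ) × ℝ => ρ p.1 p.2) :=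
    hρ.differentiable (by norm_num)
  have hEk : ∀ k : Fin 3, ContDiff ℝ 2 (fun p : (Fin 3 → ℝ) × ℝ => E p.1 p.2 k) :=
    fun k => contDiff_pi.mp hE k
  have hBk : ∀ k : Fin 3, ContDiff ℝ 2 (fun p : (Fin 3 → ℝ) × ℝ => B p.1 p.2 k) :=
    fun k => contDiff_pi.mp hB k
  have hJk : ∀ k : Fin 3, ContDiff ℝ 1 (fun p : (Fin 3 → ℝ) × ℝ => J p.1 p.2 k) :=
    fun k => contDiff_pi.mp hJ k
  have hEkd : ∀ k : Fin 3, Differentiable ℝ (fun p : (Fin 3 → ℝ) × ℝ => E p.1 p.2 k) :=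
    fun k => (hEk k).differentiable (by norm_num)
  have hBkd : ∀ k : Fin 3, Differentiable ℝ (fun p : (Fin 3 → ℝ) × ℝ => B p.1 p.2 k) :=
    fun k => (hBk k).differentiable (by norm_num)
  have hJkd : ∀ k : Fin 3, Differentiable ℝ (fun p : (Fin 3 → ℝ) × ℝ => J p.1 p.2 k) :=
    fun k => (hJk k).differentiable (by norm_num)
  have hcne : c ^ 2 ≠ 0 := pow_ne_zero 2 hc.ne'
  have hcm : c ^ 2 * μ = 1 / ε := by
    rw [hcεμ]; field_simp
  -- Ampère's law componentwise, solved for the time derivative of E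
  have amp : ∀ (y : Fin 3 → ℝ) (s : ℝ) (k : Fin 3),
      fderiv ℝ (fun p : (Fin 3 → ℝ) × ℝ => E p.1 p.2 k) (y, s) (0, 1)
        = c ^ 2 * vcurl (fun z => B z s) y k - (c ^ 2 * μ) * J y s k := by
    intro y s k
    have h1 := congrFun (ampere y s) k
    have h2 : deriv (fun s' => E y s') s
        = fderiv ℝ (fun p : (Fin 3 → ℝ) × ℝ => E p.1 p.2) (y, s) (0, 1) :=
      (gl_hasDerivAt_right _ hEd y s).deriv
    have h3 : fderiv ℝ (fun p : (Fin 3 → ℝ) × ℝ => E p.1 p.2 k) (y, s) (0, 1)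
        = fderiv ℝ (fun p : (Fin 3 → ℝ) × ℝ => E p.1 p.2) (y, s) (0, 1) k :=
      gl_pi_apply _ _ (hEd _) k _
    simp only [Pi.sub_apply, Pi.smul_apply, smul_eq_mul] at h1
    rw [h2] at h1
    rw [h3]
    have h4 : (1 / c ^ 2) * fderiv ℝ (fun p : (Fin 3 → ℝ) × ℝ => E p.1 p.2) (y, s) (0, 1) k
        = vcurl (fun z => B z s) y k - μ * J y s k := by linarith
    have h5 : fderiv ℝ (fun p : (Fin 3 → ℝ) × ℝ => E p.1 p.2) (y, s) (0, 1) k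
        = c ^ 2 * ((1 / c ^ 2) * fderiv ℝ (fun p : (Fin 3 → ℝ) × ℝ => E p.1 p.2) (y, s) (0, 1) k) := by
      field_simp
    rw [h5, h4]; ring
  -- curl components as second-order data
  have curlB : ∀ (y : Fin 3 → ℝ) (s : ℝ),
      (vcurl (fun z => B z s) y 0
          = fderiv ℝ (fun p : (Fin 3 → ℝ) × ℝ => B p.1 p.2 2) (y, s) (Pi.single 1 1, 0)
            - fderiv ℝ (fun p : (Fin 3 → ℝ) × ℝ => B p.1 p.2 1) (y, s) (Pi.single 2 1, 0))
        ∧ (vcurl (fun z => B z s) y 1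
          = fderiv ℝ (fun p : (Fin 3 → ℝ) × ℝ => B p.1 p.2 0) (y, s) (Pi.single 2 1, 0)
            - fderiv ℝ (fun p : (Fin 3 → ℝ) × ℝ => B p.1 p.2 2) (y, s) (Pi.single 0 1, 0))
        ∧ (vcurl (fun z => B z s) y 2
          = fderiv ℝ (fun p : (Fin 3 → ℝ) × ℝ => B p.1 p.2 1) (y, s) (Pi.single 0 1, 0)
            - fderiv ℝ (fun p : (Fin 3 → ℝ) × ℝ => B p.1 p.2 0) (y, s) (Pi.single 1 1, 0)) := by
    intro y s
    refine ⟨?_, ?_, ?_⟩ <;>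
      simp only [vcurl, Matrix.cons_val_zero, Matrix.cons_val_one, Matrix.head_cons,
        Matrix.cons_val_two, Matrix.tail_cons, pd] <;>
      rw [gl_slice_left _ (hBkd _) s y _, gl_slice_left _ (hBkd _) s y _]
  -- time derivative of the divergence of E
  have key : ∀ s : ℝ, HasDerivAt (fun s' => vdiv (fun y => E y s') x)
      ((c ^ 2 * μ) * fderiv ℝ (fun p : (Fin 3 → ℝ) × ℝ => ρ p.1 p.2) (x, s) (0, 1)) s := by
    intro s
    have hfun : (fun s' => vdiv (fun y => E y s') x)
        = fun s' => ∑ k : Fin 3,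
            fderiv ℝ (fun p : (Fin 3 → ℝ) × ℝ => E p.1 p.2 k) (x, s') (Pi.single k 1, 0) := by
      funext s'
      unfold vdiv pd
      exact Finset.sum_congr rfl fun k _ => gl_slice_left _ (hEkd k) s' x _
    have hDk : ∀ k : Fin 3, HasDerivAt
        (fun s' => fderiv ℝ (fun p : (Fin 3 → ℝ) × ℝ => E p.1 p.2 k) (x, s') (Pi.single k 1, 0))
        (fderiv ℝ (fun p => fderiv ℝ (fun p : (Fin 3 → ℝ) × ℝ => E p.1 p.2 k) p (Pi.single k 1, 0))
          (x, s) (0, 1)) s :=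
      fun k => gl_hasDerivAt_right _ ((gl_contDiff_dir _ (hEk k) _).differentiable (by norm_num)) x s
    have hD := HasDerivAt.sum (u := Finset.univ) (fun k _ => hDk k)
    rw [hfun]
    -- evaluate the sum of mixed partials
    have hsum : ∑ k : Fin 3,
        fderiv ℝ (fun p => fderiv ℝ (fun p : (Fin 3 → ℝ) × ℝ => E p.1 p.2 k) p (Pi.single k 1, 0))
          (x, s) (0, 1)
        = (c ^ 2 * μ) * fderiv ℝ (fun p : (Fin 3 → ℝ) × ℝ => ρ p.1 p.2) (x, s) (0, 1) := by
      have T0 := gl_term (c ^ 2) (c ^ 2 * μ) _ _ _ _ (hEk 0) (hBk 2) (hBk 1) (hJk 0) x s 0 1 2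
        (fun y => by rw [amp y s 0, (curlB y s).1])
      have T1 := gl_term (c ^ 2) (c ^ 2 * μ) _ _ _ _ (hEk 1) (hBk 0) (hBk 2) (hJk 1) x s 1 2 0
        (fun y => by rw [amp y s 1, (curlB y s).2.1])
      have T2 := gl_term (c ^ 2) (c ^ 2 * μ) _ _ _ _ (hEk 2) (hBk 1) (hBk 0) (hJk 2) x s 2 0 1
        (fun y => by rw [amp y s 2, (curlB y s).2.2])
      rw [Fin.sum_univ_three, T0, T1, T2]
      -- symmetry of the second derivatives of B
      have S0 := gl_swap _ (hBk 0) (x, s) (Pi.single 2 1, 0) (Pi.single 1 1, 0)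
      have S1 := gl_swap _ (hBk 1) (x, s) (Pi.single 0 1, 0) (Pi.single 2 1, 0)
      have S2 := gl_swap _ (hBk 2) (x, s) (Pi.single 1 1, 0) (Pi.single 0 1, 0)
      -- divergence of J from the continuity equation
      have hJdiv : vdiv (fun y => J y s) x
          = ∑ k : Fin 3, fderiv ℝ (fun p : (Fin 3 → ℝ) × ℝ => J p.1 p.2 k) (x, s)
              (Pi.single k 1, 0) := by
        unfold vdiv pd
        exact Finset.sum_congr rfl fun k _ => gl_slice_left _ (hJkd k) s x _
      have hρderiv : deriv (fun s' => ρ x s') s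
          = fderiv ℝ (fun p : (Fin 3 → ℝ) × ℝ => ρ p.1 p.2) (x, s) (0, 1) :=
        (gl_hasDerivAt_right _ hρd x s).deriv
      have hcont := continuity x s
      rw [hρderiv, hJdiv, Fin.sum_univ_three] at hcont
      linear_combination c ^ 2 * S0 + c ^ 2 * S1 + c ^ 2 * S2 - (c ^ 2 * μ) * hcont
    rw [← hsum]
    exact hD
  -- the function vdiv E − (1/ε) ρ is constant in time
  have hρside : ∀ s : ℝ, HasDerivAt (fun s' => (1 / ε) * ρ x s')
      ((1 / ε) * fderiv ℝ (fun p : (Fin 3 → ℝ) × ℝ => ρ p.1 p.2) (x, s) (0, 1)) s :=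
    fun s => (gl_hasDerivAt_right _ hρd x s).const_mul (1 / ε)
  have hzero : ∀ s : ℝ, HasDerivAt
      (fun s' => vdiv (fun y => E y s') x - (1 / ε) * ρ x s') 0 s := by
    intro s
    have h := (key s).sub (hρside s)
    rw [hcm, sub_self] at h
    exact h
  have hconst := is_const_of_deriv_eq_zero
    (fun s => (hzero s).differentiableAt) (fun s => (hzero s).deriv) t t₀
  rw [h₀ x] at hconst
  linarith
end

section
/- Let c > 0, ζ > 0, ε > 0 and s < 0. Then the contour integral of e^{−izs}/D(z) along the horizontal line Im z = −ε, i.e. the convergent improper integral ∫_{−∞}^{∞} e^{−i(x−iε)s} / (ζ² − ((x−iε)/c)²) dx, equals (cπi/ζ)(e^{i s c ζ} − e^{−i s c ζ}). -/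
open MeasureTheory Set Complex Filter Real FourierTransform

lemma cexpIoi_aux {w : ℂ} (hw : w.re < 0) :
    IntegrableOn (fun u : ℝ => Complex.exp (w * u)) (Ioi 0) ∧
      ∫ u : ℝ in Ioi 0, Complex.exp (w * u) = -w⁻¹ := by
  have hw0 : w ≠ 0 := fun h => by simp [h] at hw
  have hint : IntegrableOn (fun u : ℝ => Complex.exp (w * u)) (Ioi 0) := by
    have h : IntegrableOn (fun u : ℝ => Real.exp (-(-w.re) * u)) (Ioi 0) :=
      exp_neg_integrableOn_Ioi 0 (by linarith)
    refine h.integrable.mono' ?_ ?_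
    · exact (Complex.continuous_exp.comp
        (continuous_const.mul Complex.continuous_ofReal)).aestronglyMeasurable
    · filter_upwards with u
      simp [Complex.norm_exp, mul_comm]
  refine ⟨hint, ?_⟩
  have hderiv : ∀ u ∈ Ioi (0:ℝ),
      HasDerivAt (fun u : ℝ => Complex.exp (w * u) / w) (Complex.exp (w * u)) u := by
    intro u _
    have h1 : HasDerivAt (fun z : ℂ => Complex.exp (w * z) / w)
        (Complex.exp (w * (u:ℂ))) (u:ℂ) := by
      have := (((hasDerivAt_id (u:ℂ)).const_mul w).cexp).div_const w
      simpa [mul_div_assoc, div_self hw0] using this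
    exact h1.comp_ofReal
  have htend : Tendsto (fun u : ℝ => Complex.exp (w * u) / w) atTop (nhds 0) := by
    rw [tendsto_zero_iff_norm_tendsto_zero]
    have h2 : Tendsto (fun u : ℝ => Real.exp (w.re * u) / ‖w‖) atTop (nhds 0) := by
      have h3 : Tendsto (fun u : ℝ => w.re * u) atTop atBot :=
        tendsto_id.const_mul_atTop_of_neg hw
      simpa using (Real.tendsto_exp_atBot.comp h3).div_const ‖w‖
    refine h2.congr fun u => ?_
    simp [Complex.norm_exp]
  have hcont : ContinuousWithinAt (fun u : ℝ => Complex.exp (w * u) / w) (Ici 0) 0 :=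
    (((Complex.continuous_exp.comp
      (continuous_const.mul Complex.continuous_ofReal)).div_const w).continuousAt).continuousWithinAt
  have := integral_Ioi_of_hasDerivAt_of_tendsto hcont hderiv hint htend
  rw [this]; simp [div_eq_mul_inv]

lemma fourierG_aux (z₁ z₂ : ℂ) (h₁ : 0 < z₁.im) (h₂ : 0 < z₂.im) (hne : z₁ ≠ z₂) (x : ℝ) :
    𝓕 (Set.indicator (Ici (0:ℝ)) (fun u : ℝ =>
        (2*π*Complex.I/(z₁ - z₂)) *
          (Complex.exp (2*π*Complex.I*z₁*u) - Complex.exp (2*π*Complex.I*z₂*u)))) x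
      = ((x:ℂ) - z₁)⁻¹ * ((x:ℂ) - z₂)⁻¹ := by
  set κ : ℂ := 2*π*Complex.I/(z₁ - z₂) with hκ
  have hπ : (π:ℝ) ≠ 0 := Real.pi_ne_zero
  have hw : ∀ z : ℂ, 0 < z.im → (2*π*Complex.I*(z - x)).re < 0 := by
    intro z hz
    simp [Complex.mul_re, Complex.mul_im]
    nlinarith [Real.pi_pos]
  have hw1 := cexpIoi_aux (hw z₁ h₁)
  have hw2 := cexpIoi_aux (hw z₂ h₂)
  rw [Real.fourier_real_eq_integral_exp_smul]
  have hind : ∀ v : ℝ,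
      Complex.exp (↑(-2 * π * v * x) * Complex.I) •
        (Set.indicator (Ici (0:ℝ)) (fun u : ℝ =>
          κ * (Complex.exp (2*π*Complex.I*z₁*u) - Complex.exp (2*π*Complex.I*z₂*u)))) v
      = Set.indicator (Ici (0:ℝ)) (fun u : ℝ =>
          κ * Complex.exp ((2*π*Complex.I*(z₁ - x)) * u)
            - κ * Complex.exp ((2*π*Complex.I*(z₂ - x)) * u)) v := by
    intro v
    by_cases hv : (0:ℝ) ≤ v
    · simp only [Set.indicator_apply, Set.mem_Ici, hv, if_true]
      have e1 : ∀ z : ℂ, Complex.exp (↑(-2 * π * v * x) * Complex.I) *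
          Complex.exp (2*π*Complex.I*z*v) = Complex.exp ((2*π*Complex.I*(z - x)) * v) := by
        intro z
        rw [← Complex.exp_add]
        congr 1
        push_cast; ring
      rw [smul_eq_mul, show Complex.exp (↑(-2 * π * v * x) * Complex.I) *
          (κ * (Complex.exp (2*π*Complex.I*z₁*v) - Complex.exp (2*π*Complex.I*z₂*v)))
        = κ * (Complex.exp (↑(-2 * π * v * x) * Complex.I) * Complex.exp (2*π*Complex.I*z₁*v))
          - κ * (Complex.exp (↑(-2 * π * v * x) * Complex.I) * Complex.exp (2*π*Complex.I*z₂*v))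
        from by ring, e1, e1]
    · simp only [Set.indicator_apply, Set.mem_Ici, hv, if_false, smul_zero]
  rw [integral_congr_ae (Filter.Eventually.of_forall hind),
    integral_indicator measurableSet_Ici, integral_Ici_eq_integral_Ioi,
    integral_sub ((hw1.1).const_mul κ) ((hw2.1).const_mul κ),
    integral_const_mul, integral_const_mul, hw1.2, hw2.2]
  have hx1 : (x:ℂ) - z₁ ≠ 0 := fun h => by
    have := congrArg Complex.im h; simp at this; linarith
  have hx2 : (x:ℂ) - z₂ ≠ 0 := fun h => by
    have := congrArg Complex.im h; simp at this; linarith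
  have hz1x : z₁ - (x:ℂ) ≠ 0 := fun h => hx1 (by linear_combination -h)
  have hz2x : z₂ - (x:ℂ) ≠ 0 := fun h => hx2 (by linear_combination -h)
  have h12 : z₁ - z₂ ≠ 0 := sub_ne_zero.mpr hne
  have hπC : (π:ℂ) ≠ 0 := Complex.ofReal_ne_zero.mpr hπ
  have hW1 : 2*(π:ℂ)*Complex.I*(z₁ - x) ≠ 0 := by
    refine mul_ne_zero (by simp [hπC, Complex.I_ne_zero]) hz1x
  have hW2 : 2*(π:ℂ)*Complex.I*(z₂ - x) ≠ 0 := by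
    refine mul_ne_zero (by simp [hπC, Complex.I_ne_zero]) hz2x
  rw [hκ]
  field_simp
  ring

lemma key_aux (z₁ z₂ : ℂ) (h₁ : 0 < z₁.im) (h₂ : 0 < z₂.im) (hne : z₁ ≠ z₂)
    {u₀ : ℝ} (hu : 0 < u₀) :
    Integrable (fun x : ℝ => ((x:ℂ) - z₁)⁻¹ * ((x:ℂ) - z₂)⁻¹) ∧
      ∫ x : ℝ, Complex.exp (↑(2*π*x*u₀) * Complex.I) * (((x:ℂ) - z₁)⁻¹ * ((x:ℂ) - z₂)⁻¹)
        = (2*π*Complex.I/(z₁ - z₂)) *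
            (Complex.exp (2*π*Complex.I*z₁*u₀) - Complex.exp (2*π*Complex.I*z₂*u₀)) := by
  have hx1 : ∀ x : ℝ, (x:ℂ) - z₁ ≠ 0 := fun x h => by
    have := congrArg Complex.im h; simp at this; linarith
  have hx2 : ∀ x : ℝ, (x:ℂ) - z₂ ≠ 0 := fun x h => by
    have := congrArg Complex.im h; simp at this; linarith
  set F : ℝ → ℂ := fun x => ((x:ℂ) - z₁)⁻¹ * ((x:ℂ) - z₂)⁻¹ with hF
  -- Integrability of F
  have hFcont : Continuous F := by
    exact ((Complex.continuous_ofReal.sub continuous_const).inv₀ hx1).mul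
      ((Complex.continuous_ofReal.sub continuous_const).inv₀ hx2)
  have hbound : ∀ x : ℝ, 1 ≤ |x| → 2*‖z₁‖ ≤ |x| → 2*‖z₂‖ ≤ |x| →
      ‖F x‖ ≤ 8 * ‖(1+x^2)⁻¹‖ := by
    intro x hx h1 h2
    have n1 : |x|/2 ≤ ‖(x:ℂ) - z₁‖ := by
      have := norm_sub_norm_le ((x:ℂ)) z₁
      rw [Complex.norm_real, Real.norm_eq_abs] at this; linarith
    have n2 : |x|/2 ≤ ‖(x:ℂ) - z₂‖ := by
      have := norm_sub_norm_le ((x:ℂ)) z₂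
      rw [Complex.norm_real, Real.norm_eq_abs] at this; linarith
    have hpos : (0:ℝ) < |x|/2 := by linarith
    have hprod : (1+x^2)/8 ≤ ‖(x:ℂ) - z₁‖ * ‖(x:ℂ) - z₂‖ := by
      nlinarith [mul_le_mul n1 n2 (le_of_lt hpos) (norm_nonneg ((x:ℂ) - z₁)),
        _root_.sq_abs x, mul_le_mul hx hx (by norm_num : (0:ℝ) ≤ 1) (abs_nonneg x)]
    have h8 : (0:ℝ) < (1+x^2)/8 := by positivity
    have : ‖F x‖ = (‖(x:ℂ) - z₁‖ * ‖(x:ℂ) - z₂‖)⁻¹ := by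
      show ‖((x:ℂ) - z₁)⁻¹ * ((x:ℂ) - z₂)⁻¹‖ = _
      rw [norm_mul, norm_inv, norm_inv, mul_inv]
    rw [this]
    have hle : (‖(x:ℂ) - z₁‖ * ‖(x:ℂ) - z₂‖)⁻¹ ≤ ((1+x^2)/8)⁻¹ :=
      inv_anti₀ h8 hprod
    have : ‖(1+x^2)⁻¹‖ = (1+x^2)⁻¹ := by
      rw [Real.norm_eq_abs, abs_of_pos (by positivity)]
    rw [this]
    calc (‖(x:ℂ) - z₁‖ * ‖(x:ℂ) - z₂‖)⁻¹ ≤ ((1+x^2)/8)⁻¹ := hle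
      _ = 8 * (1+x^2)⁻¹ := by rw [div_eq_mul_inv, mul_inv, mul_comm]; norm_num
  set M : ℝ := max 1 (max (2*‖z₁‖) (2*‖z₂‖)) with hM
  have hFint : Integrable F := by
    refine hFcont.locallyIntegrable.integrable_of_isBigO_atBot_atTop
      (g := fun x : ℝ => (1+x^2)⁻¹) ?_ ?_ (g' := fun x : ℝ => (1+x^2)⁻¹) ?_ ?_
    · rw [Asymptotics.isBigO_iff]
      refine ⟨8, ?_⟩
      filter_upwards [eventually_le_atBot (-M)] with x hx
      have hM1 : (1:ℝ) ≤ M := le_max_left _ _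
      have habs : M ≤ |x| := by
        rw [abs_of_nonpos (by linarith)]
        linarith
      exact hbound x (le_trans (le_max_left _ _) habs)
        (le_trans (le_trans (le_max_left _ _) (le_max_right _ _)) habs)
        (le_trans (le_trans (le_max_right _ _) (le_max_right _ _)) habs)
    · exact ⟨univ, univ_mem, integrable_inv_one_add_sq.integrableOn⟩
    · rw [Asymptotics.isBigO_iff]
      refine ⟨8, ?_⟩
      filter_upwards [eventually_ge_atTop M] with x hx
      have habs : M ≤ |x| := le_trans hx (le_abs_self x)
      exact hbound x (le_trans (le_max_left _ _) habs)
        (le_trans (le_trans (le_max_left _ _) (le_max_right _ _)) habs)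
        (le_trans (le_trans (le_max_right _ _) (le_max_right _ _)) habs)
    · exact ⟨univ, univ_mem, integrable_inv_one_add_sq.integrableOn⟩
  -- the auxiliary function G
  set φ : ℝ → ℂ := fun u =>
    (2*π*Complex.I/(z₁ - z₂)) *
      (Complex.exp (2*π*Complex.I*z₁*u) - Complex.exp (2*π*Complex.I*z₂*u)) with hφ
  set G : ℝ → ℂ := Set.indicator (Ici (0:ℝ)) φ with hG
  have hre : ∀ z : ℂ, 0 < z.im → (2*π*Complex.I*z).re < 0 := by
    intro z hz
    simp [Complex.mul_re, Complex.mul_im]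
    nlinarith [Real.pi_pos]
  have hGint : Integrable G := by
    rw [hG, integrable_indicator_iff measurableSet_Ici]
    have : IntegrableOn φ (Ioi 0) :=
      (((cexpIoi_aux (hre z₁ h₁)).1.sub (cexpIoi_aux (hre z₂ h₂)).1).const_mul _)
    exact (integrableOn_Ici_iff_integrableOn_Ioi).mpr this
  have hFG : 𝓕 G = F := by
    funext x
    exact fourierG_aux z₁ z₂ h₁ h₂ hne x
  have hGcont : ContinuousAt G u₀ := by
    have hφc : Continuous φ := by
      apply Continuous.mul continuous_const
      exact (Complex.continuous_exp.comp
          ((continuous_const.mul Complex.continuous_ofReal))).sub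
        (Complex.continuous_exp.comp ((continuous_const.mul Complex.continuous_ofReal)))
    refine hφc.continuousAt.congr ?_
    filter_upwards [Ioi_mem_nhds hu] with y hy
    simp only [hG, Set.indicator_apply, Set.mem_Ici]
    rw [if_pos (le_of_lt hy)]
  refine ⟨hFint, ?_⟩
  have hinv : 𝓕⁻ (𝓕 G) u₀ = G u₀ :=
    hGint.fourierInv_fourier_eq (by rw [hFG]; exact hFint) hGcont
  rw [hFG] at hinv
  rw [Real.fourierInv_eq_fourier_neg,
    Real.fourier_real_eq_integral_exp_smul] at hinv
  have hGu : G u₀ = φ u₀ := by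
    simp only [hG, Set.indicator_apply, Set.mem_Ici]
    rw [if_pos (le_of_lt hu)]
  rw [hGu] at hinv
  calc ∫ x : ℝ, Complex.exp (↑(2*π*x*u₀) * Complex.I) * (((x:ℂ) - z₁)⁻¹ * ((x:ℂ) - z₂)⁻¹)
      = ∫ v : ℝ, Complex.exp (↑(-2 * π * v * -u₀) * Complex.I) • F v := by
        refine integral_congr_ae (Filter.Eventually.of_forall fun v => ?_)
        simp only [smul_eq_mul]
        congr 2
        push_cast
        ring
    _ = φ u₀ := hinv
    _ = _ := rfl

/-- For `c, ζ, ε > 0` and `s < 0`, the contour integral of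
`e^{−izs}/D(z)`, `D(z) = ζ² − (z/c)²`, along the line `Im z = −ε` (which lies below the
poles `z = ±cζ`) converges and equals `(cπi/ζ)(e^{iscζ} − e^{−iscζ})`. -/
theorem contour_integral_advanced_green_kernel
    (c ζ ε s : ℝ) (hc : 0 < c) (hζ : 0 < ζ) (hε : 0 < ε) (hs : s < 0) :
    Integrable (fun x : ℝ =>
        Complex.exp (-Complex.I * ((x : ℂ) - Complex.I * (ε : ℂ)) * (s : ℂ)) /
          ((ζ : ℂ) ^ 2 - (((x : ℂ) - Complex.I * (ε : ℂ)) / (c : ℂ)) ^ 2)) ∧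
      ∫ x : ℝ,
          Complex.exp (-Complex.I * ((x : ℂ) - Complex.I * (ε : ℂ)) * (s : ℂ)) /
            ((ζ : ℂ) ^ 2 - (((x : ℂ) - Complex.I * (ε : ℂ)) / (c : ℂ)) ^ 2)
        = ((c : ℂ) * (Real.pi : ℂ) * Complex.I / (ζ : ℂ)) *
            (Complex.exp (Complex.I * (s : ℂ) * (c : ℂ) * (ζ : ℂ))
              - Complex.exp (-(Complex.I * (s : ℂ) * (c : ℂ) * (ζ : ℂ)))) := by
  have hπ : (0:ℝ) < π := Real.pi_pos
  set z₁ : ℂ := (c:ℂ)*(ζ:ℂ) + (ε:ℂ)*Complex.I with hz₁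
  set z₂ : ℂ := -((c:ℂ)*(ζ:ℂ)) + (ε:ℂ)*Complex.I with hz₂
  have h₁ : 0 < z₁.im := by simp [hz₁]; exact hε
  have h₂ : 0 < z₂.im := by simp [hz₂]; exact hε
  have hne : z₁ ≠ z₂ := by
    intro h
    rw [hz₁, hz₂] at h
    have := congrArg Complex.re h
    simp at this
    nlinarith
  set u₀ : ℝ := -s/(2*π) with hu₀
  have hu : 0 < u₀ := by
    rw [hu₀]
    apply div_pos (by linarith) (by positivity)
  obtain ⟨hFint, hFval⟩ := key_aux z₁ z₂ h₁ h₂ hne hu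
  set K : ℂ := -(c:ℂ)^2 * Complex.exp (-((ε:ℂ)*(s:ℂ))) with hK
  have hx1 : ∀ x : ℝ, (x:ℂ) - z₁ ≠ 0 := fun x h => by
    have := congrArg Complex.im h; simp [hz₁] at this; linarith
  have hx2 : ∀ x : ℝ, (x:ℂ) - z₂ ≠ 0 := fun x h => by
    have := congrArg Complex.im h; simp [hz₂] at this; linarith
  have hcC : (c:ℂ) ≠ 0 := Complex.ofReal_ne_zero.mpr (ne_of_gt hc)
  have hζC : (ζ:ℂ) ≠ 0 := Complex.ofReal_ne_zero.mpr (ne_of_gt hζ)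
  have hπC : (π:ℂ) ≠ 0 := Complex.ofReal_ne_zero.mpr (ne_of_gt hπ)
  have hptwise : ∀ x : ℝ,
      Complex.exp (-Complex.I * ((x : ℂ) - Complex.I * (ε : ℂ)) * (s : ℂ)) /
          ((ζ : ℂ) ^ 2 - (((x : ℂ) - Complex.I * (ε : ℂ)) / (c : ℂ)) ^ 2)
      = K * (Complex.exp (↑(2*π*x*u₀) * Complex.I) * (((x:ℂ) - z₁)⁻¹ * ((x:ℂ) - z₂)⁻¹)) := by
    intro x
    have hden : (ζ : ℂ) ^ 2 - (((x : ℂ) - Complex.I * (ε : ℂ)) / (c : ℂ)) ^ 2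
        = -(((x:ℂ) - z₁) * ((x:ℂ) - z₂)) / (c:ℂ)^2 := by
      rw [hz₁, hz₂]
      field_simp
      ring
    have hnum : Complex.exp (-Complex.I * ((x : ℂ) - Complex.I * (ε : ℂ)) * (s : ℂ))
        = Complex.exp (↑(2*π*x*u₀) * Complex.I) * Complex.exp (-((ε:ℂ)*(s:ℂ))) := by
      rw [← Complex.exp_add]
      congr 1
      rw [hu₀]
      push_cast
      have h2 : ((2:ℂ)*π*x*(-s/(2*π))) = -(x*s) := by
        field_simp
      rw [h2]
      linear_combination ((ε:ℂ)*(s:ℂ)) * Complex.I_sq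
    rw [hden, hnum, hK]
    field_simp [hx1 x, hx2 x]
  constructor
  · refine (integrable_congr (Filter.Eventually.of_forall fun x => (hptwise x).symm)).mp ?_
    refine Integrable.const_mul ?_ K
    refine hFint.bdd_mul (c := 1) ?_ (Filter.Eventually.of_forall fun x => ?_)
    · exact (Complex.continuous_exp.comp
        ((Complex.continuous_ofReal.comp (by continuity)).mul continuous_const)).aestronglyMeasurable
    · rw [Complex.norm_exp]
      simp
  · rw [integral_congr_ae (Filter.Eventually.of_forall hptwise), integral_const_mul, hFval]
    have hz12 : z₁ - z₂ = 2*(c:ℂ)*(ζ:ℂ) := by rw [hz₁, hz₂]; ring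
    have he₁ : Complex.exp (2*↑π*Complex.I*z₁*↑u₀)
        = Complex.exp (-(Complex.I * (s : ℂ) * (c : ℂ) * (ζ : ℂ))) *
            Complex.exp ((ε:ℂ)*(s:ℂ)) := by
      rw [← Complex.exp_add]
      congr 1
      rw [hz₁, hu₀]
      push_cast
      field_simp
      linear_combination (-(ε:ℂ)*(s:ℂ)) * Complex.I_sq
    have he₂ : Complex.exp (2*↑π*Complex.I*z₂*↑u₀)
        = Complex.exp (Complex.I * (s : ℂ) * (c : ℂ) * (ζ : ℂ)) *
            Complex.exp ((ε:ℂ)*(s:ℂ)) := by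
      rw [← Complex.exp_add]
      congr 1
      rw [hz₂, hu₀]
      push_cast
      field_simp
      linear_combination (-(ε:ℂ)*(s:ℂ)) * Complex.I_sq
    rw [he₁, he₂, hz12, hK]
    have hee : Complex.exp (-((ε:ℂ)*(s:ℂ))) * Complex.exp ((ε:ℂ)*(s:ℂ)) = 1 := by
      rw [← Complex.exp_add]; simp
    calc -(c:ℂ)^2 * Complex.exp (-((ε:ℂ)*(s:ℂ))) *
          (2*(π:ℂ)*Complex.I/(2*(c:ℂ)*(ζ:ℂ)) *
            (Complex.exp (-(Complex.I * (s:ℂ) * (c:ℂ) * (ζ:ℂ))) * Complex.exp ((ε:ℂ)*(s:ℂ))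
              - Complex.exp (Complex.I * (s:ℂ) * (c:ℂ) * (ζ:ℂ)) * Complex.exp ((ε:ℂ)*(s:ℂ))))
        = (Complex.exp (-((ε:ℂ)*(s:ℂ))) * Complex.exp ((ε:ℂ)*(s:ℂ))) *
            (-(c:ℂ)^2 * (2*(π:ℂ)*Complex.I/(2*(c:ℂ)*(ζ:ℂ))) *
              (Complex.exp (-(Complex.I * (s:ℂ) * (c:ℂ) * (ζ:ℂ)))
                - Complex.exp (Complex.I * (s:ℂ) * (c:ℂ) * (ζ:ℂ)))) := by ring
      _ = -(c:ℂ)^2 * (2*(π:ℂ)*Complex.I/(2*(c:ℂ)*(ζ:ℂ))) *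
              (Complex.exp (-(Complex.I * (s:ℂ) * (c:ℂ) * (ζ:ℂ)))
                - Complex.exp (Complex.I * (s:ℂ) * (c:ℂ) * (ζ:ℂ))) := by rw [hee, one_mul]
      _ = ((c : ℂ) * (π : ℂ) * Complex.I / (ζ : ℂ)) *
            (Complex.exp (Complex.I * (s : ℂ) * (c : ℂ) * (ζ : ℂ))
              - Complex.exp (-(Complex.I * (s : ℂ) * (c : ℂ) * (ζ : ℂ)))) := by
          field_simp
          ring
end

section
/- Let α > 0 and ε > 0. Then the vector-valued double integral ∫₀^{2π} ∫₀^{ε} ρ · (ρ cos θ, ρ sin θ, εα) / (ρ² + (εα)²)^{3/2} dρ dθ equals (0, 0, 2π(1 − α/√(1+α²))). In particular its value is independent of ε, it is a multiple of the unit normal direction (0,0,1), and hence the ε → 0 limit of this integral exists and equals χ·(0,0,1) with χ = 2π(1 − α/√(1+α²)). -/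
open intervalIntegral Filter

lemma kern_cont (c : ℝ) (hc : 0 < c) :
    Continuous (fun r : ℝ => r / (r ^ 2 + c ^ 2) ^ ((3:ℝ)/2)) := by
  have hpos : ∀ r : ℝ, (0:ℝ) < r ^ 2 + c ^ 2 := fun r => by positivity
  apply continuous_id.div
  · exact (continuous_pow 2 |>.add continuous_const).rpow_const
      (fun r => Or.inr (by norm_num))
  · intro r
    exact (Real.rpow_pos_of_pos (hpos r) _).ne'

lemma z_int (α ε : ℝ) (hα : 0 < α) (hε : 0 < ε) :
    (∫ r in (0:ℝ)..ε, (r / (r ^ 2 + (ε*α) ^ 2) ^ ((3:ℝ)/2)) * (ε*α))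
      = 1 - α / Real.sqrt (1 + α ^ 2) := by
  set c := ε * α with hc_def
  have hc : 0 < c := mul_pos hε hα
  have hpos : ∀ r : ℝ, (0:ℝ) < r ^ 2 + c ^ 2 := fun r => by positivity
  have hderiv : ∀ r ∈ Set.uIcc (0:ℝ) ε,
      HasDerivAt (fun r : ℝ => -((r ^ 2 + c ^ 2) ^ (-(1:ℝ)/2)))
        (r / (r ^ 2 + c ^ 2) ^ ((3:ℝ)/2)) r := by
    intro r _
    have h1 : HasDerivAt (fun r : ℝ => r ^ 2 + c ^ 2) (2 * r) r := by
      simpa using ((hasDerivAt_pow 2 r).add_const (c ^ 2))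
    have h2 := (h1.rpow_const (p := -(1:ℝ)/2) (Or.inl (hpos r).ne')).neg
    convert h2 using 1
    case e'_4 => rfl
    case e'_5 => rfl
    case e'_8 => rfl
    have : (r ^ 2 + c ^ 2) ^ (-(1:ℝ)/2 - 1) = ((r ^ 2 + c ^ 2) ^ ((3:ℝ)/2))⁻¹ := by
      rw [show (-(1:ℝ)/2 - 1) = -((3:ℝ)/2) by norm_num,
        Real.rpow_neg (hpos r).le]
    rw [this]; field_simp
  have hint : IntervalIntegrable (fun r : ℝ => r / (r ^ 2 + c ^ 2) ^ ((3:ℝ)/2))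
      MeasureTheory.volume 0 ε := (kern_cont c hc).intervalIntegrable _ _
  rw [intervalIntegral.integral_mul_const,
    intervalIntegral.integral_eq_sub_of_hasDerivAt hderiv hint]
  have hsq : Real.sqrt (ε ^ 2 + c ^ 2) = ε * Real.sqrt (1 + α ^ 2) := by
    rw [hc_def, mul_pow, show ε ^ 2 + ε ^ 2 * α ^ 2 = ε ^ 2 * (1 + α ^ 2) by ring,
      Real.sqrt_mul (by positivity), Real.sqrt_sq hε.le]
  have h2 : ((c:ℝ) ^ 2) ^ (-(1:ℝ)/2) = c⁻¹ := by
    rw [show (-(1:ℝ)/2) = -(1/2) by norm_num, Real.rpow_neg (by positivity),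
      ← Real.sqrt_eq_rpow, Real.sqrt_sq hc.le]
  have h3 : ((ε:ℝ) ^ 2 + c ^ 2) ^ (-(1:ℝ)/2) = (ε * Real.sqrt (1 + α ^ 2))⁻¹ := by
    rw [show (-(1:ℝ)/2) = -(1/2) by norm_num, Real.rpow_neg (hpos ε).le,
      ← Real.sqrt_eq_rpow, hsq]
  rw [show (0:ℝ)^2 + c^2 = c^2 by ring, h3, h2]
  have hs : (0:ℝ) < Real.sqrt (1 + α ^ 2) := Real.sqrt_pos.mpr (by positivity)
  rw [hc_def]
  field_simp
  ring

lemma main_eval (α : ℝ) (hα : 0 < α) (ε : ℝ) (hε : 0 < ε) :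
    (∫ θ in (0:ℝ)..(2 * Real.pi), ∫ r in (0:ℝ)..ε,
        (r / (r ^ 2 + (ε * α) ^ 2) ^ ((3:ℝ)/2)) •
          (![r * Real.cos θ, r * Real.sin θ, ε * α] : Fin 3 → ℝ))
      = ![0, 0, 2 * Real.pi * (1 - α / Real.sqrt (1 + α ^ 2))] := by
  have hc : 0 < ε * α := mul_pos hε hα
  set f : ℝ → ℝ := fun r => r / (r ^ 2 + (ε * α) ^ 2) ^ ((3:ℝ)/2) with hf
  have hfc : Continuous f := kern_cont _ hc
  set A : ℝ := ∫ r in (0:ℝ)..ε, f r * r with hA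
  set B : ℝ := 1 - α / Real.sqrt (1 + α ^ 2) with hB
  have inner : ∀ θ : ℝ,
      (∫ r in (0:ℝ)..ε, f r •
          (![r * Real.cos θ, r * Real.sin θ, ε * α] : Fin 3 → ℝ))
        = (A * Real.cos θ) • (![1,0,0] : Fin 3 → ℝ)
          + ((A * Real.sin θ) • (![0,1,0] : Fin 3 → ℝ)
            + B • (![0,0,1] : Fin 3 → ℝ)) := by
    intro θ
    have hpt : ∀ r : ℝ, f r • (![r * Real.cos θ, r * Real.sin θ, ε * α] : Fin 3 → ℝ)
        = ((f r * r) * Real.cos θ) • (![1,0,0] : Fin 3 → ℝ)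
          + (((f r * r) * Real.sin θ) • (![0,1,0] : Fin 3 → ℝ)
            + (f r * (ε * α)) • (![0,0,1] : Fin 3 → ℝ)) := by
      intro r
      funext i
      fin_cases i <;> simp <;> ring
    have i1 : IntervalIntegrable
        (fun r : ℝ => ((f r * r) * Real.cos θ) • (![1,0,0] : Fin 3 → ℝ))
        MeasureTheory.volume 0 ε :=
      (((hfc.mul continuous_id).mul continuous_const).smul continuous_const).intervalIntegrable _ _
    have i2 : IntervalIntegrable
        (fun r : ℝ => ((f r * r) * Real.sin θ) • (![0,1,0] : Fin 3 → ℝ))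
        MeasureTheory.volume 0 ε :=
      (((hfc.mul continuous_id).mul continuous_const).smul continuous_const).intervalIntegrable _ _
    have i3 : IntervalIntegrable
        (fun r : ℝ => (f r * (ε * α)) • (![0,0,1] : Fin 3 → ℝ))
        MeasureTheory.volume 0 ε :=
      ((hfc.mul continuous_const).smul continuous_const).intervalIntegrable _ _
    calc (∫ r in (0:ℝ)..ε, f r • (![r * Real.cos θ, r * Real.sin θ, ε * α] : Fin 3 → ℝ))
        = ∫ r in (0:ℝ)..ε,
            (((f r * r) * Real.cos θ) • (![1,0,0] : Fin 3 → ℝ)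
              + (((f r * r) * Real.sin θ) • (![0,1,0] : Fin 3 → ℝ)
                + (f r * (ε * α)) • (![0,0,1] : Fin 3 → ℝ))) := by
            exact intervalIntegral.integral_congr (fun r _ => hpt r)
      _ = (∫ r in (0:ℝ)..ε, ((f r * r) * Real.cos θ)) • (![1,0,0] : Fin 3 → ℝ)
          + ((∫ r in (0:ℝ)..ε, ((f r * r) * Real.sin θ)) • (![0,1,0] : Fin 3 → ℝ)
            + (∫ r in (0:ℝ)..ε, (f r * (ε * α))) • (![0,0,1] : Fin 3 → ℝ)) := by
            rw [intervalIntegral.integral_add i1 (i2.add i3),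
              intervalIntegral.integral_add i2 i3,
              intervalIntegral.integral_smul_const,
              intervalIntegral.integral_smul_const,
              intervalIntegral.integral_smul_const]
      _ = (A * Real.cos θ) • (![1,0,0] : Fin 3 → ℝ)
          + ((A * Real.sin θ) • (![0,1,0] : Fin 3 → ℝ)
            + B • (![0,0,1] : Fin 3 → ℝ)) := by
            rw [intervalIntegral.integral_mul_const, intervalIntegral.integral_mul_const,
              ← hA]
            congr 3
            exact z_int α ε hα hε
  rw [intervalIntegral.integral_congr (g := fun θ =>
      (A * Real.cos θ) • (![1,0,0] : Fin 3 → ℝ)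
        + ((A * Real.sin θ) • (![0,1,0] : Fin 3 → ℝ)
          + B • (![0,0,1] : Fin 3 → ℝ))) (fun θ _ => inner θ)]
  have j1 : IntervalIntegrable
      (fun θ : ℝ => (A * Real.cos θ) • (![1,0,0] : Fin 3 → ℝ))
      MeasureTheory.volume 0 (2 * Real.pi) :=
    ((continuous_const.mul Real.continuous_cos).smul continuous_const).intervalIntegrable _ _
  have j2 : IntervalIntegrable
      (fun θ : ℝ => (A * Real.sin θ) • (![0,1,0] : Fin 3 → ℝ))
      MeasureTheory.volume 0 (2 * Real.pi) :=
    ((continuous_const.mul Real.continuous_sin).smul continuous_const).intervalIntegrable _ _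
  have j3 : IntervalIntegrable
      (fun _ : ℝ => B • (![0,0,1] : Fin 3 → ℝ))
      MeasureTheory.volume 0 (2 * Real.pi) :=
    intervalIntegrable_const
  rw [intervalIntegral.integral_add j1 (j2.add j3),
    intervalIntegral.integral_add j2 j3,
    intervalIntegral.integral_smul_const,
    intervalIntegral.integral_smul_const,
    intervalIntegral.integral_const,
    intervalIntegral.integral_const_mul, intervalIntegral.integral_const_mul,
    integral_cos, integral_sin]
  simp only [Real.sin_two_pi, Real.sin_zero, Real.cos_two_pi, Real.cos_zero,
    sub_zero, sub_self, mul_zero, zero_smul, zero_add, add_zero, smul_smul]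
  funext i
  fin_cases i <;> simp [hB]

/-- The polar-coordinate evaluation of the singular surface integral:
for `α, ε > 0`,
`∫₀^{2π} ∫₀^{ε} ρ (ρcosθ, ρsinθ, εα)/(ρ² + (εα)²)^{3/2} dρ dθ
  = (0, 0, 2π(1 − α/√(1+α²)))`.
In particular the value is independent of `ε`, is a multiple of the unit normal
direction `(0,0,1)`, and the `ε → 0⁺` limit exists and equals `χ • (0,0,1)` with
`χ = 2π(1 − α/√(1+α²))`. -/
theorem singular_surface_integral_polar
    (α : ℝ) (hα : 0 < α) :
    (∀ ε : ℝ, 0 < ε →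
      (∫ θ in (0:ℝ)..(2 * Real.pi), ∫ r in (0:ℝ)..ε,
          (r / (r ^ 2 + (ε * α) ^ 2) ^ ((3:ℝ)/2)) •
            (![r * Real.cos θ, r * Real.sin θ, ε * α] : Fin 3 → ℝ))
        = ![0, 0, 2 * Real.pi * (1 - α / Real.sqrt (1 + α ^ 2))]) ∧
    Tendsto (fun ε : ℝ =>
        ∫ θ in (0:ℝ)..(2 * Real.pi), ∫ r in (0:ℝ)..ε,
          (r / (r ^ 2 + (ε * α) ^ 2) ^ ((3:ℝ)/2)) •
            (![r * Real.cos θ, r * Real.sin θ, ε * α] : Fin 3 → ℝ))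
      (nhdsWithin 0 (Set.Ioi 0))
      (nhds ((2 * Real.pi * (1 - α / Real.sqrt (1 + α ^ 2))) • (![0, 0, 1] : Fin 3 → ℝ))) := by
  refine ⟨fun ε hε => main_eval α hα ε hε, ?_⟩
  have hv : (2 * Real.pi * (1 - α / Real.sqrt (1 + α ^ 2))) • (![0, 0, 1] : Fin 3 → ℝ)
      = ![0, 0, 2 * Real.pi * (1 - α / Real.sqrt (1 + α ^ 2))] := by
    funext i; fin_cases i <;> simp
  rw [hv]
  apply Tendsto.congr' _ tendsto_const_nhds
  filter_upwards [self_mem_nhdsWithin] with ε hε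
  exact (main_eval α hα ε hε).symm
end
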